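/- The supremum, over all triples (y_1, y_2, y_3) of real numbers with y_1 ≥ y_2 ≥ y_3 ≥ 0 and y_1 + y_2 + y_3 = 1, of min(3·y_1, y_1 + 3·y_2, 2·y_1 + 3·y_3, y_1 + 2·y_2 + 3·y_3) equals 3/2. In other words, t_3 = 3/2. -/
import Mathlib

/-- `t_3 = 3/2`: the supremum over `y₁ ≥ y₂ ≥ y₃ ≥ 0` with `y₁ + y₂ + y₃ = 1` of
`min(3y₁, y₁ + 3y₂, 2y₁ + 3y₃, y₁ + 2y₂ + 3y₃)` equals `3/2`. -/
theorem stmt_11 :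
    IsGreatest {v : ℝ | ∃ y₁ y₂ y₃ : ℝ, y₂ ≤ y₁ ∧ y₃ ≤ y₂ ∧ 0 ≤ y₃ ∧ y₁ + y₂ + y₃ = 1 ∧
        v = min (min (3 * y₁) (y₁ + 3 * y₂)) (min (2 * y₁ + 3 * y₃) (y₁ + 2 * y₂ + 3 * y₃))}
      (3 / 2) := by
  constructor
  · exact ⟨1/2, 1/3, 1/6, by norm_num, by norm_num, by norm_num, by norm_num, by norm_num⟩
  · rintro v ⟨y₁, y₂, y₃, h12, h23, h3, hsum, rfl⟩
    have h1 : y₁ + 3 * y₂ ≤ 3/2 ∨ 2 * y₁ + 3 * y₃ ≤ 3/2 := by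
      by_contra h
      push_neg at h
      linarith [h.1, h.2]
    rcases h1 with h | h
    · calc _ ≤ min (3 * y₁) (y₁ + 3 * y₂) := min_le_left _ _
        _ ≤ y₁ + 3 * y₂ := min_le_right _ _
        _ ≤ 3/2 := h
    · calc _ ≤ min (2 * y₁ + 3 * y₃) (y₁ + 2 * y₂ + 3 * y₃) := min_le_right _ _
        _ ≤ 2 * y₁ + 3 * y₃ := min_le_left _ _
        _ ≤ 3/2 := h
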